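/- For n ≥ 2, the set U_{n+1,1} of up-down alternating permutations u ∈ S_{n+1} with u(1) = 1 is in bijection with the set of down-up alternating permutations of S_n, via u ↦ (u(2)−1, u(3)−1, …, u(n+1)−1); moreover, this bijection sends the big-return set of u to the big-return set of the image, so the distribution of the number of big returns over U_{n+1,1} equals the distribution of big returns over down-up alternating permutations of S_n. -/

import Mathlib

/-- `u` is an up-down alternating permutation: `u(1) < u(2) > u(3) < ⋯`. -/
def IsUpDownAlt {n : ℕ} (u : Equiv.Perm (Fin n)) : Prop :=
  ∀ (i : ℕ) (h : i + 1 < n),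
    (i % 2 = 0 → u ⟨i, Nat.lt_of_succ_lt h⟩ < u ⟨i + 1, h⟩) ∧
    (i % 2 = 1 → u ⟨i + 1, h⟩ < u ⟨i, Nat.lt_of_succ_lt h⟩)

/-- `v` is a down-up alternating permutation: `v(1) > v(2) < v(3) > ⋯`. -/
def IsDownUpAlt {n : ℕ} (u : Equiv.Perm (Fin n)) : Prop :=
  ∀ (i : ℕ) (h : i + 1 < n),
    (i % 2 = 0 → u ⟨i + 1, h⟩ < u ⟨i, Nat.lt_of_succ_lt h⟩) ∧
    (i % 2 = 1 → u ⟨i, Nat.lt_of_succ_lt h⟩ < u ⟨i + 1, h⟩)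

/-- The set of big returns of `w`: (0-indexed) values `j` with `w⁻¹(j) > w⁻¹(j+1) + 1`. -/
def bigRetSet {n : ℕ} (w : Equiv.Perm (Fin n)) : Set ℕ :=
  {j | ∃ h : j + 1 < n, (w⁻¹ ⟨j + 1, h⟩).val + 1 < (w⁻¹ ⟨j, Nat.lt_of_succ_lt h⟩).val}

namespace UDAux

variable {n : ℕ}

def downFun (u : Equiv.Perm (Fin (n+1))) (i : Fin n) : Fin n :=
  ⟨(u i.succ).val - 1, by have h1 := (u i.succ).isLt; have h2 := i.isLt; omega⟩

lemma inv_zero (u : Equiv.Perm (Fin (n+1))) (h : u 0 = 0) : u⁻¹ 0 = 0 := by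
  apply u.injective; simp [h]

lemma succ_pos_val (u : Equiv.Perm (Fin (n+1))) (h : u 0 = 0) (i : Fin n) :
    0 < (u i.succ).val := by
  rcases Nat.eq_zero_or_pos (u i.succ).val with hz | hp
  swap
  · exact hp
  · exfalso
    have : u i.succ = 0 := Fin.ext (by simpa using hz)
    have := u.injective (this.trans h.symm)
    exact Fin.succ_ne_zero i this

lemma downFun_succ (u : Equiv.Perm (Fin (n+1))) (h : u 0 = 0) (i : Fin n) :
    (downFun u i).succ = u i.succ := by
  have h1 := succ_pos_val u h i
  apply Fin.ext
  simp only [downFun, Fin.val_succ]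
  omega

def downPerm (u : Equiv.Perm (Fin (n+1))) (h : u 0 = 0) : Equiv.Perm (Fin n) where
  toFun := downFun u
  invFun := downFun u⁻¹
  left_inv i := by
    have h' : u⁻¹ 0 = 0 := inv_zero u h
    apply Fin.succ_injective
    rw [downFun_succ u⁻¹ h', downFun_succ u h]
    simp
  right_inv j := by
    have h' : u⁻¹ 0 = 0 := inv_zero u h
    apply Fin.succ_injective
    rw [downFun_succ u h, downFun_succ u⁻¹ h']
    simp

lemma downPerm_apply (u : Equiv.Perm (Fin (n+1))) (h : u 0 = 0) (i : Fin n) :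
    downPerm u h i = downFun u i := rfl

lemma downPerm_inv_apply (u : Equiv.Perm (Fin (n+1))) (h : u 0 = 0) (j : Fin n) :
    (downPerm u h)⁻¹ j = downFun u⁻¹ j := rfl

lemma downPerm_lt_iff (u : Equiv.Perm (Fin (n+1))) (h : u 0 = 0) (i j : Fin n) :
    downPerm u h i < downPerm u h j ↔ u i.succ < u j.succ := by
  have hi := succ_pos_val u h i
  have hj := succ_pos_val u h j
  simp only [downPerm_apply, downFun, Fin.lt_def]
  omega

def upPerm (v : Equiv.Perm (Fin n)) : Equiv.Perm (Fin (n+1)) where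
  toFun := Fin.cases 0 (fun i => (v i).succ)
  invFun := Fin.cases 0 (fun j => (v⁻¹ j).succ)
  left_inv x := by cases x using Fin.cases <;> simp
  right_inv x := by cases x using Fin.cases <;> simp

lemma upPerm_zero (v : Equiv.Perm (Fin n)) : upPerm v 0 = 0 := rfl

lemma upPerm_succ (v : Equiv.Perm (Fin n)) (i : Fin n) : upPerm v i.succ = (v i).succ := by
  simp [upPerm, Equiv.coe_fn_mk]

lemma downPerm_upPerm (v : Equiv.Perm (Fin n)) :
    downPerm (upPerm v) (upPerm_zero v) = v := by
  ext i
  rw [downPerm_apply]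
  simp [downFun, upPerm_succ]

lemma upPerm_downPerm (u : Equiv.Perm (Fin (n+1))) (h : u 0 = 0) :
    upPerm (downPerm u h) = u := by
  ext x
  cases x using Fin.cases with
  | zero => rw [upPerm_zero, h]
  | succ i => rw [upPerm_succ, downPerm_apply, downFun_succ u h]

lemma isDownUpAlt_downPerm (u : Equiv.Perm (Fin (n+1))) (h : u 0 = 0)
    (hu : IsUpDownAlt u) : IsDownUpAlt (downPerm u h) := by
  intro i hi
  have h2 : i + 1 + 1 < n + 1 := by omega
  have := hu (i+1) h2
  constructor
  · intro hp
    rw [downPerm_lt_iff]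
    exact this.2 (by omega)
  · intro hp
    rw [downPerm_lt_iff]
    exact this.1 (by omega)

lemma isUpDownAlt_of_downPerm (u : Equiv.Perm (Fin (n+1))) (h : u 0 = 0)
    (hv : IsDownUpAlt (downPerm u h)) : IsUpDownAlt u := by
  intro i hi
  match i with
  | 0 =>
    refine ⟨fun _ => ?_, fun hp => by omega⟩
    have hn : 0 < n := by omega
    have h0 : (⟨0, Nat.lt_of_succ_lt hi⟩ : Fin (n+1)) = 0 := rfl
    have h1 : (⟨1, hi⟩ : Fin (n+1)) = (⟨0, hn⟩ : Fin n).succ := rfl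
    rw [h0, h1, h]
    have := succ_pos_val u h ⟨0, hn⟩
    exact Fin.lt_def.mpr (by simpa using this)
  | (i'+1) =>
    have hi' : i' + 1 < n := by omega
    have := hv i' hi'
    have e1 : (⟨i'+1, Nat.lt_of_succ_lt hi⟩ : Fin (n+1)) = (⟨i', Nat.lt_of_succ_lt hi'⟩ : Fin n).succ := rfl
    have e2 : (⟨i'+1+1, hi⟩ : Fin (n+1)) = (⟨i'+1, hi'⟩ : Fin n).succ := rfl
    constructor
    · intro hp
      rw [e1, e2, ← downPerm_lt_iff u h]
      exact this.2 (by omega)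
    · intro hp
      rw [e1, e2, ← downPerm_lt_iff u h]
      exact this.1 (by omega)

lemma downPerm_inv_val (u : Equiv.Perm (Fin (n+1))) (h : u 0 = 0) {j : ℕ} (hj : j < n) :
    ((downPerm u h)⁻¹ ⟨j, hj⟩).val + 1 = (u⁻¹ ⟨j + 1, by omega⟩).val := by
  rw [downPerm_inv_apply]
  have hsucc : ((⟨j, hj⟩ : Fin n).succ) = (⟨j+1, by omega⟩ : Fin (n+1)) := rfl
  have hp : 0 < (u⁻¹ ((⟨j, hj⟩ : Fin n).succ)).val := succ_pos_val u⁻¹ (inv_zero u h) _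
  simp only [downFun, hsucc] at *
  omega

lemma bigRet_succ_iff (u : Equiv.Perm (Fin (n+1))) (h : u 0 = 0) (j : ℕ) :
    j + 1 ∈ bigRetSet u ↔ j ∈ bigRetSet (downPerm u h) := by
  unfold bigRetSet
  simp only [Set.mem_setOf_eq]
  constructor
  · rintro ⟨h2, hlt⟩
    have hj1 : j + 1 < n := by omega
    refine ⟨hj1, ?_⟩
    have e1 := downPerm_inv_val u h (Nat.lt_of_succ_lt hj1)
    have e2 := downPerm_inv_val u h hj1
    omega
  · rintro ⟨h2, hlt⟩
    refine ⟨by omega, ?_⟩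
    have e1 := downPerm_inv_val u h (Nat.lt_of_succ_lt h2)
    have e2 := downPerm_inv_val u h h2
    omega

lemma zero_not_bigRet (u : Equiv.Perm (Fin (n+1))) (h : u 0 = 0) :
    0 ∉ bigRetSet u := by
  rintro ⟨h1, hlt⟩
  have h0 : (⟨0, Nat.lt_of_succ_lt h1⟩ : Fin (n+1)) = 0 := rfl
  rw [h0, inv_zero u h] at hlt
  simp at hlt

lemma ncard_bigRet_eq (u : Equiv.Perm (Fin (n+1))) (h : u 0 = 0) :
    (bigRetSet u).ncard = (bigRetSet (downPerm u h)).ncard := by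
  have himg : bigRetSet u = Nat.succ '' bigRetSet (downPerm u h) := by
    ext j
    cases j with
    | zero =>
      simp only [Set.mem_image]
      constructor
      · intro hj; exact absurd hj (zero_not_bigRet u h)
      · rintro ⟨x, _, hx⟩; exact absurd hx (Nat.succ_ne_zero x)
    | succ j' =>
      simp only [Set.mem_image]
      constructor
      · intro hj; exact ⟨j', (bigRet_succ_iff u h j').1 hj, rfl⟩
      · rintro ⟨x, hx, hxe⟩
        have hxj : x = j' := by omega
        exact hxj ▸ (bigRet_succ_iff u h x).2 hx
  rw [himg, Set.ncard_image_of_injective _ Nat.succ_injective]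
def Phi (n : ℕ) :
    {u : Equiv.Perm (Fin (n + 1)) //
        IsUpDownAlt u ∧ u ⟨0, n.succ_pos⟩ = ⟨0, n.succ_pos⟩} ≃
      {v : Equiv.Perm (Fin n) // IsDownUpAlt v} where
  toFun u := ⟨downPerm u.1 u.2.2, isDownUpAlt_downPerm _ _ u.2.1⟩
  invFun v := ⟨upPerm v.1,
    isUpDownAlt_of_downPerm _ (upPerm_zero _) (by rw [downPerm_upPerm]; exact v.2),
    upPerm_zero v.1⟩
  left_inv u := Subtype.ext (upPerm_downPerm u.1 u.2.2)
  right_inv v := Subtype.ext (downPerm_upPerm v.1)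

end UDAux

open UDAux

/-- for `n ≥ 2`, the set `U_{n+1,1}` of up-down alternating permutations
`u ∈ S_{n+1}` with `u(1) = 1` is in bijection with the down-up alternating permutations of
`S_n`, via `u ↦ (u(2)-1, …, u(n+1)-1)`; the bijection sends the big-return set of `u`
(shifted by one) to the big-return set of the image, so the distribution of the number of
big returns over `U_{n+1,1}` equals that over down-up alternating permutations of `S_n`. -/
theorem updown_first_one_bijection (n : ℕ) (hn : 2 ≤ n) :
    (∃ Φ : {u : Equiv.Perm (Fin (n + 1)) //
              IsUpDownAlt u ∧ u ⟨0, n.succ_pos⟩ = ⟨0, n.succ_pos⟩} ≃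
            {v : Equiv.Perm (Fin n) // IsDownUpAlt v},
      ∀ u, (∀ i : Fin n,
              ((Φ u : Equiv.Perm (Fin n)) i).val + 1 =
                ((u : Equiv.Perm (Fin (n + 1))) i.succ).val) ∧
        (∀ j : ℕ, j + 1 ∈ bigRetSet (u : Equiv.Perm (Fin (n + 1))) ↔
            j ∈ bigRetSet (Φ u : Equiv.Perm (Fin n))) ∧
        0 ∉ bigRetSet (u : Equiv.Perm (Fin (n + 1)))) ∧
    (∀ k : ℕ,
      Set.ncard {u : Equiv.Perm (Fin (n + 1)) |
          IsUpDownAlt u ∧ u ⟨0, n.succ_pos⟩ = ⟨0, n.succ_pos⟩ ∧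
          (bigRetSet u).ncard = k} =
      Set.ncard {v : Equiv.Perm (Fin n) |
          IsDownUpAlt v ∧ (bigRetSet v).ncard = k}) := by
  constructor
  · refine ⟨Phi n, fun u => ⟨?_, ?_, ?_⟩⟩
    · intro i
      have h0 : u.1 0 = 0 := u.2.2
      show ((downPerm u.1 u.2.2) i).val + 1 = _
      change (downFun u.1 i).val + 1 = _
      have := succ_pos_val u.1 h0 i
      simp only [downFun]
      omega
    · intro j
      exact bigRet_succ_iff u.1 u.2.2 j
    · exact zero_not_bigRet u.1 u.2.2
  · intro k
    rw [← Nat.card_coe_set_eq, ← Nat.card_coe_set_eq]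
    apply Nat.card_congr
    exact {
      toFun := fun u => ⟨downPerm u.1 u.2.2.1,
        isDownUpAlt_downPerm _ _ u.2.1,
        by rw [← ncard_bigRet_eq u.1 u.2.2.1]; exact u.2.2.2⟩
      invFun := fun v => ⟨upPerm v.1,
        isUpDownAlt_of_downPerm _ (upPerm_zero _) (by rw [downPerm_upPerm]; exact v.2.1),
        upPerm_zero _,
        by rw [ncard_bigRet_eq (upPerm v.1) (upPerm_zero v.1), downPerm_upPerm]; exact v.2.2⟩
      left_inv := fun u => Subtype.ext (upPerm_downPerm u.1 u.2.2.1)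
      right_inv := fun v => Subtype.ext (downPerm_upPerm v.1) }
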